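/- For 0 ≤ j < n!, write j = ∑_{i=2}^n j_i · n!/i! with 0 ≤ j_i < i for all i (this representation exists and is unique); then the (j+1)-th permutation to appear as a contiguous substring of M_n is p_2^{j_2} ∘ p_3^{j_3} ∘ ⋯ ∘ p_n^{j_n}. -/

import Mathlib

def pcyc (k : ℕ) : Equiv.Perm ℕ := (List.range' 1 k).formPerm

/-- The ordered composition `p_2^{e 2} ∘ p_3^{e 3} ∘ ⋯ ∘ p_n^{e n}`. -/
def circProd (n : ℕ) (e : ℕ → ℕ) : Equiv.Perm ℕ :=
  ((List.range' 2 (n - 1)).map fun i => (pcyc i) ^ (e i)).prod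

/-- All length-`n` windows of `s`. -/
def windows (n : ℕ) (s : List ℕ) : List (List ℕ) :=
  (List.range (s.length + 1 - n)).map fun i => (s.drop i).take n

/-- The permutations of `{1,…,n}` in order of first appearance as substrings of `s`. -/
def permsOrder (n : ℕ) (s : List ℕ) : List (List ℕ) :=
  (((windows n s).filter fun w => decide (w.Perm (List.range' 1 n))).reverse.dedup).reverse

/-- Length of the maximal overlap: the longest suffix of `s` that is a prefix of `t`. -/
def ov (s t : List ℕ) : ℕ :=
  ((List.range (min s.length t.length + 1)).filter fun l => (t.take l).isSuffixOf s).foldr max 0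

/-- Concatenate with maximal overlap. -/
def mergeOv (s t : List ℕ) : List ℕ := s ++ t.drop (ov s t)

/-- The recursively constructed superpermutation `M_n`. -/
def Mrec : ℕ → List ℕ
  | 0 => []
  | 1 => [1]
  | n + 2 =>
      ((permsOrder (n + 1) (Mrec (n + 1))).map fun P => P ++ [n + 2] ++ P).foldl mergeOv []

/-! ### auxiliary definitions -/

def blockf (n : ℕ) (P : List ℕ) (u : ℕ) : List ℕ := P.drop u ++ [n+1] ++ P.take u

def block (n : ℕ) (P : List ℕ) : List (List ℕ) := (List.range (n+1)).map (blockf n P)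

/-! ### windows lemmas -/

lemma windows_append (k : ℕ) (hk : 1 ≤ k) (A B : List ℕ) :
    windows k (A ++ B) = windows k A ++ windows k (A.drop (A.length + 1 - k) ++ B) := by
  rcases Nat.lt_or_ge (A.length + 1) k with h | h
  · have h1 : A.length + 1 - k = 0 := by omega
    have h2 : (A.length + 1 - k) = 0 := h1
    rw [h1, List.drop_zero]
    have : windows k A = [] := by simp [windows, h1]
    rw [this, List.nil_append]
  · have hd : A.length + 1 - k ≤ A.length := by omega
    have len1 : (A ++ B).length + 1 - k = (A.length + 1 - k) + B.length := by
      simp only [List.length_append]; omega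
    have len2 : (A.drop (A.length + 1 - k) ++ B).length + 1 - k = B.length := by
      simp only [List.length_append, List.length_drop]; omega
    unfold windows
    rw [len1, len2, List.range_add, List.map_append, List.map_map]
    congr 1
    · apply List.map_congr_left
      intro i hi
      have hi' : i < A.length + 1 - k := List.mem_range.mp hi
      rw [List.drop_append, Nat.sub_eq_zero_of_le (by omega), List.drop_zero,
        List.take_append_of_le_length (by simp only [List.length_drop]; omega)]
    · apply List.map_congr_left
      intro t ht
      simp only [Function.comp_apply]
      rw [← List.drop_drop]
      congr 1
      rw [List.drop_append, Nat.sub_eq_zero_of_le hd, List.drop_zero]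

lemma windows_prepend (k : ℕ) (hk : 1 ≤ k) (C Q : List ℕ) (h : k ≤ Q.length) :
    windows k (C ++ Q) =
      (List.range C.length).map (fun i => (C.drop i ++ Q).take k) ++ windows k Q := by
  have len1 : (C ++ Q).length + 1 - k = C.length + (Q.length + 1 - k) := by
    simp only [List.length_append]; omega
  unfold windows
  rw [len1, List.range_add, List.map_append, List.map_map]
  congr 1
  · apply List.map_congr_left
    intro i hi
    have hi' : i < C.length := List.mem_range.mp hi
    rw [List.drop_append, Nat.sub_eq_zero_of_le (by omega), List.drop_zero]
  · apply List.map_congr_left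
    intro t ht
    simp only [Function.comp_apply]
    rw [List.drop_append, List.drop_eq_nil_of_le (by omega), List.nil_append,
      Nat.add_sub_cancel_left]

lemma windows_Q (n : ℕ) (P : List ℕ) (hP : P.length = n) :
    windows (n+1) (P ++ [n+1] ++ P) = block n P := by
  have len1 : (P ++ [n+1] ++ P).length + 1 - (n+1) = n + 1 := by
    simp only [List.length_append, List.length_cons, List.length_nil]; omega
  unfold windows block
  rw [len1]
  apply List.map_congr_left
  intro u hu
  have hu' : u < n + 1 := List.mem_range.mp hu
  have e1 : u - n = 0 := by omega
  have e2 : u - (n+1) = 0 := by omega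
  have l1 : (P ++ [n+1]).length = n + 1 := by simp [hP]
  rw [List.drop_append, l1, e2, List.drop_zero,
      List.drop_append, hP, e1, List.drop_zero]
  have l2 : (P.drop u ++ [n+1]).length = n + 1 - u := by
    simp only [List.length_append, List.length_drop, hP, List.length_cons, List.length_nil]
    omega
  rw [List.take_append, List.take_of_length_le (by rw [l2]; omega), l2]
  have e3 : n + 1 - (n + 1 - u) = u := by omega
  rw [e3]
  rfl

/-! ### perm/filter facts -/

lemma range'_one_succ (n : ℕ) : List.range' 1 (n+1) = List.range' 1 n ++ [n+1] := by
  rw [List.range'_concat]; norm_num [Nat.add_comm]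

lemma blockf_perm {n : ℕ} {P : List ℕ} (hP : P.Perm (List.range' 1 n)) (u : ℕ) :
    (blockf n P u).Perm (List.range' 1 (n+1)) := by
  rw [range'_one_succ]
  refine List.Perm.trans ?_ (hP.append_right [n+1])
  show ((P.drop u ++ [n+1]) ++ P.take u).Perm (P ++ [n+1])
  refine (List.perm_append_comm).trans ?_
  rw [← List.append_assoc, List.take_append_drop]

lemma mem_of_perm_range' {n x : ℕ} {P : List ℕ} (hP : P.Perm (List.range' 1 n))
    (hx : x ∈ P) : 1 ≤ x ∧ x < n + 1 := by
  have := hP.mem_iff.mp hx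
  rw [List.mem_range'] at this
  obtain ⟨i, hi, rfl⟩ := this
  omega

lemma not_mem_of_perm_range' {n : ℕ} {P : List ℕ} (hP : P.Perm (List.range' 1 n)) :
    n + 1 ∉ P := fun h => by have := mem_of_perm_range' hP h; omega

/-! ### ov lemmas -/

lemma foldr_max_choice (l : List ℕ) : l.foldr max 0 = 0 ∨ l.foldr max 0 ∈ l := by
  induction l with
  | nil => exact Or.inl rfl
  | cons a t ih =>
    simp only [List.foldr_cons]
    rcases Nat.le_total a (t.foldr max 0) with h | h
    · rw [Nat.max_eq_right h]
      rcases ih with h' | h'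
      · exact Or.inl h'
      · exact Or.inr (List.mem_cons_of_mem _ h')
    · rw [Nat.max_eq_left h]
      exact Or.inr (List.mem_cons_self)

lemma ov_suffix (s t : List ℕ) : (t.take (ov s t)) <:+ s := by
  rcases foldr_max_choice ((List.range (min s.length t.length + 1)).filter
      fun l => (t.take l).isSuffixOf s) with h | h
  · unfold ov; rw [h]; simp [List.nil_suffix]
  · have := (List.mem_filter.mp h).2
    exact List.isSuffixOf_iff_suffix.mp (by unfold ov; exact this)

lemma ov_le_min (s t : List ℕ) : ov s t ≤ min s.length t.length := by
  rcases foldr_max_choice ((List.range (min s.length t.length + 1)).filter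
      fun l => (t.take l).isSuffixOf s) with h | h
  · unfold ov; rw [h]; omega
  · have := List.mem_range.mp (List.mem_filter.mp h).1
    unfold ov; omega

lemma ov_nil (t : List ℕ) : ov [] t = 0 := by
  have := ov_le_min [] t
  simp at this
  omega

lemma Qmid {n : ℕ} {P : List ℕ} (hPlen : P.length = n) (i : ℕ)
    (hi : i < (P ++ [n+1] ++ P).length) (he : i = n) : (P ++ [n+1] ++ P)[i] = n+1 := by
  subst he
  rw [List.getElem_append_left (show i < (P ++ [i+1]).length by simp [hPlen])]
  rw [List.getElem_append_right (show P.length ≤ i from le_of_eq hPlen)]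
  simp [hPlen]

lemma ov_le_n {n : ℕ} {S P Pl : List ℕ} (hSlen : n ≤ S.length)
    (hlast : S.drop (S.length - n) = Pl)
    (hPl : Pl.Perm (List.range' 1 n)) (hP : P.Perm (List.range' 1 n))
    (hne : P ≠ Pl) :
    ov S (P ++ [n+1] ++ P) ≤ n := by
  have hPlen : P.length = n := by rw [hP.length_eq, List.length_range']
  have hQlen : (P ++ [n+1] ++ P).length = 2*n+1 := by
    simp only [List.length_append, List.length_cons, List.length_nil, hPlen]; omega
  by_contra hlt
  push_neg at hlt
  set o := ov S (P ++ [n+1] ++ P) with ho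
  have hsuf : ((P ++ [n+1] ++ P).take o) <:+ S := ov_suffix S _
  have hovmin : o ≤ min S.length (P ++ [n+1] ++ P).length := ov_le_min S _
  obtain ⟨U, hU⟩ := hsuf
  have hUlen : U.length + ((P ++ [n+1] ++ P).take o).length = S.length := by
    rw [← List.length_append, hU]
  have hTlen : ((P ++ [n+1] ++ P).take o).length = o := by
    rw [List.length_take]; omega
  rcases Nat.lt_or_ge o (2*n+1) with hcase | hcase
  · -- n+1 ≤ o ≤ 2n
    have hTn : ∀ (i : ℕ) (hi : i < ((P ++ [n+1] ++ P).take o).length), i = n →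
        ((P ++ [n+1] ++ P).take o)[i] = n + 1 := by
      intro i hi he
      rw [List.getElem_take]
      exact Qmid hPlen i (by omega) he
    have hdrop : S.drop (S.length - n) = ((P ++ [n+1] ++ P).take o).drop (o - n) := by
      rw [← hU, List.drop_append,
        List.drop_eq_nil_of_le (by simp only [List.length_append, hTlen]; omega),
        List.nil_append]
      congr 1
      simp only [List.length_append, hTlen]
      omega
    have hj : 2*n - o < (((P ++ [n+1] ++ P).take o).drop (o - n)).length := by
      rw [List.length_drop, hTlen]; omega
    have hel : (((P ++ [n+1] ++ P).take o).drop (o - n))[2*n - o]'hj = n + 1 := by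
      rw [List.getElem_drop]
      exact hTn _ (by omega) (by omega)
    have hmem : n + 1 ∈ S.drop (S.length - n) := by
      rw [hdrop]
      have hmm := List.getElem_mem hj
      rwa [hel] at hmm
    rw [hlast] at hmem
    exact not_mem_of_perm_range' hPl hmem
  · -- o = 2n+1
    have hT : (P ++ [n+1] ++ P).take o = P ++ [n+1] ++ P :=
      List.take_of_length_le (by omega)
    rw [hT] at hU hUlen
    have hPeq : S.drop (S.length - n) = P := by
      have hassoc : S = (U ++ (P ++ [n+1])) ++ P := by
        rw [← hU]; simp [List.append_assoc]
      have hlen : (U ++ (P ++ [n+1])).length = S.length - n := by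
        simp only [List.length_append, List.length_cons, List.length_nil, hPlen]
        simp only [hQlen, List.length_append, List.length_cons, List.length_nil,
          hPlen] at hUlen
        omega
      rw [show S.length - n = (U ++ (P ++ [n+1])).length from hlen.symm, hassoc]
      exact List.drop_left
    rw [hlast] at hPeq
    exact hne hPeq.symm

lemma step_filter {n : ℕ} {S P Pl : List ℕ} {F : List (List ℕ)}
    (hSlen : n ≤ S.length)
    (hlast : S.drop (S.length - n) = Pl)
    (hPl : Pl.Perm (List.range' 1 n)) (hP : P.Perm (List.range' 1 n)) (hne : P ≠ Pl)
    (hF : (windows (n+1) S).filter (fun w => decide (w.Perm (List.range' 1 (n+1)))) = F) :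
    (windows (n+1) (mergeOv S (P ++ [n+1] ++ P))).filter
        (fun w => decide (w.Perm (List.range' 1 (n+1)))) = F ++ block n P
    ∧ (mergeOv S (P ++ [n+1] ++ P)).drop ((mergeOv S (P ++ [n+1] ++ P)).length - n) = P
    ∧ n ≤ (mergeOv S (P ++ [n+1] ++ P)).length := by
  have hPlen : P.length = n := by rw [hP.length_eq, List.length_range']
  have hPllen : Pl.length = n := by rw [hPl.length_eq, List.length_range']
  have hQlen : (P ++ [n+1] ++ P).length = 2*n+1 := by
    simp only [List.length_append, List.length_cons, List.length_nil, hPlen]; omega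
  set o := ov S (P ++ [n+1] ++ P) with ho
  have hon : o ≤ n := ov_le_n hSlen hlast hPl hP hne
  have homin : o ≤ min S.length (P ++ [n+1] ++ P).length := ov_le_min S _
  have hsuf : ((P ++ [n+1] ++ P).take o) <:+ S := ov_suffix S _
  have hTlen : ((P ++ [n+1] ++ P).take o).length = o := by
    rw [List.length_take]; omega
  have hTd : (P ++ [n+1] ++ P).take o = S.drop (S.length - o) := by
    have := List.suffix_iff_eq_drop.mp hsuf
    rwa [hTlen] at this
  have hPldrop : Pl.drop (n - o) = (P ++ [n+1] ++ P).take o := by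
    rw [← hlast, List.drop_drop, hTd]
    congr 1
    omega
  -- merged string decompositions
  have hmerge : mergeOv S (P ++ [n+1] ++ P)
      = S.take (S.length - o) ++ (P ++ [n+1] ++ P) := by
    show S ++ (P ++ [n+1] ++ P).drop o = _
    conv_lhs => rw [← List.take_append_drop (S.length - o) S]
    rw [← hTd, List.append_assoc, List.take_append_drop]
  have hmlen : (mergeOv S (P ++ [n+1] ++ P)).length = S.length - o + (2*n+1) := by
    rw [hmerge, List.length_append, List.length_take, hQlen]
    omega
  -- conclusion 2 and 3
  have hc3 : n ≤ (mergeOv S (P ++ [n+1] ++ P)).length := by omega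
  have hc2 : (mergeOv S (P ++ [n+1] ++ P)).drop
      ((mergeOv S (P ++ [n+1] ++ P)).length - n) = P := by
    rw [hmerge]
    rw [show S.take (S.length - o) ++ (P ++ [n+1] ++ P)
        = (S.take (S.length - o) ++ (P ++ [n+1])) ++ P by simp [List.append_assoc]]
    rw [show ((S.take (S.length - o) ++ (P ++ [n+1])) ++ P).length - n
        = (S.take (S.length - o) ++ (P ++ [n+1])).length by
      simp only [List.length_append, List.length_take, List.length_cons, List.length_nil,
        hPlen]; omega]
    exact List.drop_left
  refine ⟨?_, hc2, hc3⟩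
  -- window decomposition
  show ((windows (n+1) (S ++ (P ++ [n+1] ++ P).drop o)).filter
      (fun w => decide (w.Perm (List.range' 1 (n+1))))) = F ++ block n P
  rw [windows_append (n+1) (by omega) S _]
  rw [show S.length + 1 - (n+1) = S.length - n from by omega, hlast]
  have hCQ : Pl ++ (P ++ [n+1] ++ P).drop o = Pl.take (n - o) ++ (P ++ [n+1] ++ P) := by
    conv_lhs => rw [← List.take_append_drop (n - o) Pl]
    rw [hPldrop, List.append_assoc, List.take_append_drop]
  rw [hCQ]
  rw [windows_prepend (n+1) (by omega) _ _ (by rw [hQlen]; omega)]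
  rw [List.filter_append, List.filter_append, hF]
  have hstraddle : ((List.range (Pl.take (n - o)).length).map
      (fun i => ((Pl.take (n - o)).drop i ++ (P ++ [n+1] ++ P)).take (n+1))).filter
      (fun w => decide (w.Perm (List.range' 1 (n+1)))) = [] := by
    rw [List.filter_eq_nil_iff]
    intro w hw
    rw [List.mem_map] at hw
    obtain ⟨i, hi, rfl⟩ := hw
    rw [List.mem_range, List.length_take, hPllen] at hi
    simp only [decide_eq_true_eq]
    intro hperm
    have hmem : n + 1 ∈ ((Pl.take (n - o)).drop i ++ (P ++ [n+1] ++ P)).take (n+1) := by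
      rw [hperm.mem_iff, List.mem_range']
      exact ⟨n, by omega, by omega⟩
    -- decompose the window
    have hClen : ((Pl.take (n - o)).drop i).length = n - o - i := by
      simp only [List.length_drop, List.length_take, hPllen]
      omega
    rw [List.take_append, hClen,
      List.take_of_length_le (by rw [hClen]; omega)] at hmem
    rcases List.mem_append.mp hmem with h | h
    · have : n + 1 ∈ Pl := List.mem_of_mem_take (List.mem_of_mem_drop h)
      exact not_mem_of_perm_range' hPl this
    · rw [List.take_append, List.take_append] at h
      rw [show n + 1 - (n - o - i) - P.length = 0 by rw [hPlen]; omega,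
          show n + 1 - (n - o - i) - (P ++ [n+1]).length = 0 by
            simp only [List.length_append, List.length_cons, List.length_nil, hPlen]; omega,
          List.take_zero] at h
      simp only [List.take_zero, List.append_nil] at h
      exact not_mem_of_perm_range' hP (List.mem_of_mem_take h)
  rw [hstraddle, windows_Q n P hPlen, List.nil_append]
  congr 1
  apply List.filter_eq_self.mpr
  intro w hw
  rw [block, List.mem_map] at hw
  obtain ⟨u, hu, rfl⟩ := hw
  exact decide_eq_true (blockf_perm hP u)

lemma filter_windows_Q {n : ℕ} {P : List ℕ} (hP : P.Perm (List.range' 1 n)) :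
    (windows (n+1) (P ++ [n+1] ++ P)).filter
      (fun w => decide (w.Perm (List.range' 1 (n+1)))) = block n P := by
  have hPlen : P.length = n := by rw [hP.length_eq, List.length_range']
  rw [windows_Q n P hPlen]
  apply List.filter_eq_self.mpr
  intro w hw
  rw [block, List.mem_map] at hw
  obtain ⟨u, hu, rfl⟩ := hw
  exact decide_eq_true (blockf_perm hP u)

lemma fold_filter {n : ℕ} (l : List (List ℕ)) :
    ∀ (S : List ℕ) (done : List (List ℕ)) (Pl : List ℕ),
    (windows (n+1) S).filter (fun w => decide (w.Perm (List.range' 1 (n+1))))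
      = done.flatMap (block n) →
    S.drop (S.length - n) = Pl → n ≤ S.length →
    Pl.Perm (List.range' 1 n) → Pl ∈ done →
    (done ++ l).Nodup → (∀ P ∈ l, P.Perm (List.range' 1 n)) →
    (windows (n+1) (l.foldl (fun s P => mergeOv s (P ++ [n+1] ++ P)) S)).filter
        (fun w => decide (w.Perm (List.range' 1 (n+1))))
      = (done ++ l).flatMap (block n) := by
  induction l with
  | nil =>
    intro S done Pl h1 h2 h3 h4 h5 h6 h7
    simpa using h1
  | cons P l ih =>
    intro S done Pl h1 h2 h3 h4 h5 h6 h7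
    have hne : P ≠ Pl := by
      intro h
      have hdisj := List.disjoint_of_nodup_append h6
      exact hdisj (h ▸ h5) (List.mem_cons_self)
    have hP : P.Perm (List.range' 1 n) := h7 P (List.mem_cons_self)
    obtain ⟨c1, c2, c3⟩ := step_filter h3 h2 h4 hP hne h1
    rw [List.foldl_cons]
    have := ih (mergeOv S (P ++ [n+1] ++ P)) (done ++ [P]) P
      (by rw [c1, List.flatMap_append]; simp)
      c2 c3 hP (by simp)
      (by rwa [List.append_assoc, List.singleton_append])
      (fun P' hP' => h7 P' (List.mem_cons_of_mem _ hP'))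
    rw [this, List.append_assoc, List.singleton_append]

lemma blockf_assoc (n : ℕ) (P : List ℕ) (u : ℕ) :
    blockf n P u = P.drop u ++ ((n+1) :: P.take u) := by
  unfold blockf; simp [List.append_assoc]

lemma blockf_idxOf {n : ℕ} {P : List ℕ} (hP : P.Perm (List.range' 1 n)) (u : ℕ) :
    (blockf n P u).idxOf (n+1) = P.length - u := by
  rw [blockf_assoc,
    List.idxOf_append_of_notMem
      (fun h => not_mem_of_perm_range' hP (List.mem_of_mem_drop h)),
    List.idxOf_cons_self]
  simp

lemma blockf_inj {n : ℕ} {P P' : List ℕ} (hP : P.Perm (List.range' 1 n))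
    (hP' : P'.Perm (List.range' 1 n)) {u u' : ℕ} (hu : u < n + 1) (hu' : u' < n + 1)
    (h : blockf n P u = blockf n P' u') : u = u' ∧ P = P' := by
  have hPlen : P.length = n := by rw [hP.length_eq, List.length_range']
  have hP'len : P'.length = n := by rw [hP'.length_eq, List.length_range']
  have hidx : P.length - u = P'.length - u' := by
    rw [← blockf_idxOf hP u, ← blockf_idxOf hP' u', h]
  have huu : u = u' := by omega
  subst huu
  refine ⟨rfl, ?_⟩
  rw [blockf_assoc, blockf_assoc] at h
  have hlen : (P.drop u).length = (P'.drop u).length := by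
    simp [hPlen, hP'len]
  obtain ⟨e1, e2⟩ := List.append_inj h hlen
  have e3 : P.take u = P'.take u := by
    injection e2
  calc P = P.take u ++ P.drop u := (List.take_append_drop _ _).symm
    _ = P'.take u ++ P'.drop u := by rw [e1, e3]
    _ = P' := List.take_append_drop _ _

lemma block_nodup {n : ℕ} {P : List ℕ} (hP : P.Perm (List.range' 1 n)) :
    (block n P).Nodup := by
  unfold block
  apply List.Nodup.map_on ?_ (List.nodup_range)
  intro u hu u' hu' h
  exact (blockf_inj hP hP (List.mem_range.mp hu) (List.mem_range.mp hu') h).1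

lemma flatMap_block_nodup {n : ℕ} {L : List (List ℕ)} (hnd : L.Nodup)
    (hperm : ∀ P ∈ L, P.Perm (List.range' 1 n)) : (L.flatMap (block n)).Nodup := by
  rw [List.nodup_flatMap]
  constructor
  · exact fun P hP => block_nodup (hperm P hP)
  · refine List.Pairwise.imp_of_mem ?_ hnd
    intro P P' hP hP' hne
    intro w hw hw'
    rw [block, List.mem_map] at hw hw'
    obtain ⟨u, hu, rfl⟩ := hw
    obtain ⟨u', hu', he⟩ := hw'
    exact hne ((blockf_inj (hperm P hP) (hperm P' hP') (List.mem_range.mp hu)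
      (List.mem_range.mp hu') he.symm).2)

lemma permsOrder_nodup (n : ℕ) (s : List ℕ) : (permsOrder n s).Nodup := by
  unfold permsOrder
  exact List.nodup_reverse.mpr (List.nodup_dedup _)

lemma permsOrder_mem_perm {n : ℕ} {s : List ℕ} {w : List ℕ} (h : w ∈ permsOrder n s) :
    w.Perm (List.range' 1 n) := by
  unfold permsOrder at h
  rw [List.mem_reverse] at h
  have := List.mem_dedup.mp h
  rw [List.mem_reverse, List.mem_filter] at this
  exact of_decide_eq_true this.2

lemma permsOrder_eq_filter {n : ℕ} {s : List ℕ}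
    (h : ((windows n s).filter fun w => decide (w.Perm (List.range' 1 n))).Nodup) :
    permsOrder n s = (windows n s).filter fun w => decide (w.Perm (List.range' 1 n)) := by
  unfold permsOrder
  rw [List.Nodup.dedup (List.nodup_reverse.mpr h), List.reverse_reverse]

lemma key (m : ℕ) :
    permsOrder (m+2) (Mrec (m+2))
      = (permsOrder (m+1) (Mrec (m+1))).flatMap (block (m+1)) := by
  have hM : Mrec (m+2)
      = ((permsOrder (m+1) (Mrec (m+1))).map fun P => P ++ [m+2] ++ P).foldl mergeOv [] :=
    rfl
  have hnd : (permsOrder (m+1) (Mrec (m+1))).Nodup := permsOrder_nodup _ _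
  have hpm : ∀ P ∈ permsOrder (m+1) (Mrec (m+1)), P.Perm (List.range' 1 (m+1)) :=
    fun P hP => permsOrder_mem_perm hP
  rcases hL : permsOrder (m+1) (Mrec (m+1)) with _ | ⟨P₀, rest⟩
  · rw [hM, hL]
    simp [permsOrder, windows]
  · rw [hL] at hnd hpm
    have hP₀ : P₀.Perm (List.range' 1 (m+1)) := hpm P₀ (List.mem_cons_self)
    have hP₀len : P₀.length = m + 1 := by rw [hP₀.length_eq, List.length_range']
    have hfold : Mrec (m+2)
        = rest.foldl (fun s P => mergeOv s (P ++ [m+2] ++ P)) (P₀ ++ [m+2] ++ P₀) := by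
      rw [hM, hL, List.map_cons, List.foldl_cons, List.foldl_map]
      congr 1
    have hQlen : (P₀ ++ [m+2] ++ P₀).length = 2*(m+1)+1 := by
      simp only [List.length_append, List.length_cons, List.length_nil, hP₀len]; omega
    have hF := fold_filter (n := m+1) rest (P₀ ++ [m+2] ++ P₀) [P₀] P₀
      (by simpa using filter_windows_Q (n := m+1) hP₀)
      (by
        rw [hQlen]
        rw [show (P₀ ++ [m+2] ++ P₀)
            = (P₀ ++ [m+2]) ++ P₀ by simp [List.append_assoc]]
        rw [show 2*(m+1)+1 - (m+1) = (P₀ ++ [m+2]).length by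
          simp only [List.length_append, List.length_cons, List.length_nil, hP₀len]; omega]
        exact List.drop_left)
      (by rw [hQlen]; omega)
      hP₀ (List.mem_singleton_self _)
      (by simpa using hnd)
      (fun P hP => hpm P (List.mem_cons_of_mem _ hP))
    rw [← hfold] at hF
    have hFnd : ((windows (m+1+1) (Mrec (m+2))).filter
        (fun w => decide (w.Perm (List.range' 1 (m+1+1))))).Nodup := by
      rw [hF]
      apply flatMap_block_nodup (by simpa using hnd)
      intro P hP
      rcases List.mem_append.mp hP with h | h
      · rw [List.mem_singleton] at h; exact h ▸ hP₀
      · exact hpm P (List.mem_cons_of_mem _ h)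
    have := permsOrder_eq_filter (n := m+1+1) (s := Mrec (m+2)) hFnd
    rw [show m+1+1 = m+2 from rfl] at this
    rw [this]
    rw [show m+2 = m+1+1 from rfl, hF]
    simp

/-! ### permutation algebra -/

lemma map_formPerm_pow {l : List ℕ} (h : l.Nodup) (u : ℕ) :
    l.map ⇑(l.formPerm ^ u) = l.rotate u := by
  apply List.ext_getElem (by simp)
  intro i h1 h2
  rw [List.getElem_map, List.formPerm_pow_apply_getElem l h u i (by simpa using h1),
    List.getElem_rotate]

lemma range'_split (s u n : ℕ) (hu : u ≤ n) :
    List.range' s n = List.range' s u ++ List.range' (s+u) (n-u) := by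
  have := List.range'_append (s := s) (m := u) (n := n-u) (step := 1)
  simp only [one_mul] at this
  rw [show u + (n - u) = n from by omega] at this
  exact this.symm

lemma drop_range' (s u n : ℕ) (hu : u ≤ n) :
    (List.range' s n).drop u = List.range' (s+u) (n-u) := by
  rw [range'_split s u n hu]
  exact List.drop_left' (by simp)

lemma take_range' (s u n : ℕ) (hu : u ≤ n) :
    (List.range' s n).take u = List.range' s u := by
  rw [range'_split s u n hu]
  exact List.take_left' (by simp)

lemma pcyc_fix {k x : ℕ} (h : x ∉ List.range' 1 k) : pcyc k x = x :=
  List.formPerm_apply_of_notMem h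

lemma pcyc_pow_fix {k x : ℕ} (h : x ∉ List.range' 1 k) (u : ℕ) : (pcyc k ^ u) x = x := by
  induction u with
  | zero => rfl
  | succ v ih => rw [pow_succ, Equiv.Perm.mul_apply, pcyc_fix h, ih]

lemma prod_pcyc_fix {x : ℕ} (e : ℕ → ℕ) (l : List ℕ) (h : ∀ i ∈ l, i < x) :
    ((l.map fun i => (pcyc i) ^ (e i)).prod) x = x := by
  induction l with
  | nil => rfl
  | cons a t ih =>
    rw [List.map_cons, List.prod_cons, Equiv.Perm.mul_apply,
      ih (fun i hi => h i (List.mem_cons_of_mem _ hi))]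
    refine pcyc_pow_fix (fun hm => ?_) _
    have h1 := List.mem_range'.mp hm
    have h2 := h a (List.mem_cons_self)
    omega

lemma circProd_fix {n x : ℕ} (d : ℕ → ℕ) (h : n + 1 ≤ x) : circProd n d x = x := by
  apply prod_pcyc_fix
  intro i hi
  have := List.mem_range'.mp hi
  omega

lemma circProd_succ (n : ℕ) (hn : 1 ≤ n) (d : ℕ → ℕ) :
    circProd (n+1) d = circProd n d * (pcyc (n+1)) ^ (d (n+1)) := by
  unfold circProd
  rw [show n + 1 - 1 = (n - 1) + 1 from by omega, List.range'_concat,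
    show 2 + 1 * (n - 1) = n + 1 from by omega, List.map_append, List.prod_append]
  simp

lemma map_range'_rotate (n u : ℕ) (hu : u ≤ n) :
    (List.range' 1 (n+1)).map ⇑(pcyc (n+1) ^ u) = List.range' (1+u) (n+1-u) ++ List.range' 1 u := by
  rw [pcyc, map_formPerm_pow (List.nodup_range' ..) u,
    List.rotate_eq_drop_append_take (by simp; omega),
    drop_range' 1 u (n+1) (by omega), take_range' 1 u (n+1) (by omega)]

lemma block_map {n : ℕ} (σ : Equiv.Perm ℕ) (hfix : σ (n+1) = n+1) (u : ℕ) (hu : u ≤ n) :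
    blockf n ((List.range' 1 n).map ⇑σ) u = (List.range' 1 (n+1)).map ⇑(σ * pcyc (n+1) ^ u) := by
  have : (List.range' 1 (n+1)).map ⇑(σ * pcyc (n+1) ^ u)
      = ((List.range' 1 (n+1)).map ⇑(pcyc (n+1) ^ u)).map ⇑σ := by
    rw [List.map_map]; rfl
  rw [this, map_range'_rotate n u hu]
  rw [show n + 1 - u = (n - u) + 1 from by omega, List.range'_concat,
    show 1 + u + 1 * (n - u) = n + 1 from by omega]
  unfold blockf
  rw [List.map_append, List.map_append]
  congr 1
  · -- (map σ (range' 1 n)).drop u ++ [n+1] = map σ (range' (1+u) (n-u)) ++ map σ [n+1]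
    congr 1
    · rw [← List.map_drop, drop_range' 1 u n hu]
    · simp [hfix]
  · rw [← List.map_take, take_range' 1 u n hu]

lemma flatMap_getElem? {α β : Type} (L : List α) (f : α → List β) (k : ℕ)
    (hf : ∀ a ∈ L, (f a).length = k) (q r : ℕ) (hr : r < k) :
    (L.flatMap f)[k * q + r]? = L[q]?.bind fun a => (f a)[r]? := by
  induction L generalizing q with
  | nil => simp
  | cons a t ih =>
    rw [List.flatMap_cons]
    cases q with
    | zero =>
      rw [Nat.mul_zero, Nat.zero_add,
        List.getElem?_append.trans (if_pos (by rw [hf a (List.mem_cons_self)]; omega))]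
      simp
    | succ q' =>
      rw [show k * (q' + 1) + r = (f a).length + (k * q' + r) from by
        rw [hf a (List.mem_cons_self)]; ring]
      rw [List.getElem?_append_right (Nat.le_add_right _ _), Nat.add_sub_cancel_left]
      rw [ih (fun b hb => hf b (List.mem_cons_of_mem _ hb))]
      simp

lemma main_aux : ∀ (n : ℕ), 1 ≤ n → ∀ (j : ℕ), j < Nat.factorial n → ∀ (d : ℕ → ℕ),
    (∀ i ∈ Finset.Icc 2 n, d i < i) →
    j = (∑ i ∈ Finset.Icc 2 n, d i * (Nat.factorial n / Nat.factorial i)) →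
    (permsOrder n (Mrec n))[j]? = some ((List.range' 1 n).map fun x => circProd n d x) := by
  intro n
  induction n with
  | zero => omega
  | succ m ih =>
    intro _ j hj d hd hsum
    rcases Nat.eq_zero_or_pos m with rfl | hm
    · -- n = 1
      have hIcc : Finset.Icc 2 1 = ∅ := by decide
      rw [hIcc, Finset.sum_empty] at hsum
      subst hsum
      have h1 : permsOrder 1 (Mrec 1) = [[1]] := by decide
      have h2 : circProd 1 d 1 = 1 := by
        simp [circProd, show (1:ℕ) - 1 = 0 from rfl]
      rw [h1]
      simp [h2]
    · -- n = m+1 ≥ 2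
      have hmem : m + 1 ∈ Finset.Icc 2 (m+1) := by
        rw [Finset.mem_Icc]; omega
      have hu : d (m+1) < m + 1 := hd (m+1) hmem
      set j' := ∑ i ∈ Finset.Icc 2 m, d i * (Nat.factorial m / Nat.factorial i) with hj'
      have hsplit : j = (m+1) * j' + d (m+1) := by
        rw [hsum, Finset.sum_Icc_succ_top (by omega)]
        rw [Nat.div_self (Nat.factorial_pos _), Nat.mul_one]
        congr 1
        rw [hj', Finset.mul_sum]
        apply Finset.sum_congr rfl
        intro i hi
        rw [Finset.mem_Icc] at hi
        rw [Nat.factorial_succ, Nat.mul_div_assoc _ (Nat.factorial_dvd_factorial hi.2)]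
        ring
      have hjlt : j' < Nat.factorial m := by
        rcases Nat.lt_or_ge j' (Nat.factorial m) with h | h
        · exact h
        · exfalso
          have : (m+1) * Nat.factorial m ≤ (m+1) * j' := Nat.mul_le_mul_left _ h
          rw [Nat.factorial_succ] at hj
          omega
      have hIH := ih hm j' hjlt d
        (fun i hi => hd i (by rw [Finset.mem_Icc] at hi ⊢; omega)) rfl
      -- key step
      obtain ⟨p, rfl⟩ : ∃ p, m = p + 1 := ⟨m - 1, by omega⟩
      rw [show p + 1 + 1 = p + 2 from rfl, key p]
      have hblen : ∀ P ∈ permsOrder (p+1) (Mrec (p+1)), (block (p+1) P).length = p + 2 := by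
        intro P _
        simp [block]
      rw [hsplit, flatMap_getElem? _ _ (p+2) hblen j' (d (p+1+1)) (by omega)]
      rw [hIH]
      rw [Option.bind_some]
      have hfix : circProd (p+1) d (p+1+1) = p+1+1 := circProd_fix d (le_refl _)
      have hblock : (block (p+1) ((List.range' 1 (p+1)).map fun x => circProd (p+1) d x))[d (p+1+1)]?
          = some (blockf (p+1) ((List.range' 1 (p+1)).map fun x => circProd (p+1) d x) (d (p+1+1))) := by
        rw [block, List.getElem?_map, List.getElem?_range (by omega)]
        rfl
      rw [hblock]
      congr 1
      have : ((List.range' 1 (p+1)).map fun x => circProd (p+1) d x)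
          = (List.range' 1 (p+1)).map ⇑(circProd (p+1) d) := rfl
      rw [this, block_map (circProd (p+1) d) hfix (d (p+1+1)) (by omega)]
      rw [← circProd_succ (p+1) (by omega) d]

theorem stmt9 (n : ℕ) (hn : 1 ≤ n) (j : ℕ) (hj : j < Nat.factorial n) (d : ℕ → ℕ)
    (hd : ∀ i ∈ Finset.Icc 2 n, d i < i)
    (hsum : j = ∑ i ∈ Finset.Icc 2 n, d i * (Nat.factorial n / Nat.factorial i)) :
    (permsOrder n (Mrec n))[j]? = some ((List.range' 1 n).map fun x => circProd n d x) :=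
  main_aux n hn j hj d hd hsum
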